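/- The ordering on finite strictly increasing sequences of ordinals (σ < τ iff τ extends σ by a prefix, or τ and σ share a terminal segment preceded by entries ν < ν' respectively) is well-founded on any set of such sequences all of whose entries are bounded by a fixed ordinal θ; hence it is a well-ordering of that set. -/

import Mathlib

open Ordinal

/-- The ordering on finite sequences of ordinals: `σ < τ` iff `τ` extends `σ` by a nonempty
prefix, or `σ` and `τ` share a common terminal segment preceded by entries `ν < ν'`
respectively. -/
def SeqLT (σ τ : List Ordinal) : Prop :=
  (∃ τ₀ : List Ordinal, τ₀ ≠ [] ∧ τ = τ₀ ++ σ) ∨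
  (∃ (σ₀ τ₀ σ₁ : List Ordinal) (ν ν' : Ordinal), ν < ν' ∧
      σ = σ₀ ++ ν :: σ₁ ∧ τ = τ₀ ++ ν' :: σ₁)

noncomputable def toOrd : List Ordinal → Ordinal
  | [] => 0
  | a :: l => ω ^ a + toOrd l

lemma toOrd_lt (b : Ordinal) : ∀ l : List Ordinal, l.Chain' (· > ·) → (∀ x ∈ l, x < b) →
    toOrd l < ω ^ b
  | [], _, _ => by
      simpa [toOrd] using Ordinal.opow_pos b Ordinal.omega0_pos
  | a :: l, hc, hb => by
      have ha : a < b := hb a List.mem_cons_self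
      have hl : ∀ x ∈ l, x < a := by
        intro x hx
        exact List.rel_of_pairwise_cons (List.isChain_iff_pairwise.mp hc) hx
      have h1 : toOrd l < ω ^ a := toOrd_lt a l hc.tail hl
      have h2 : ω ^ a < ω ^ b := (opow_lt_opow_iff_right one_lt_omega0).mpr ha
      exact (principal_add_omega0_opow b) h2 (h1.trans h2)

lemma toOrd_lt_of_lex : ∀ {l m : List Ordinal}, List.Lex (· < ·) l m →
    l.Chain' (· > ·) → toOrd l < toOrd m := by
  intro l m h
  induction h with
  | @nil b m' =>
      intro _
      have : (0 : Ordinal) < ω ^ b := Ordinal.opow_pos b Ordinal.omega0_pos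
      simpa [toOrd] using this.trans_le le_self_add
  | @cons a l' m' h ih =>
      intro hc
      simpa [toOrd] using add_lt_add_right (ih hc.tail) (ω ^ a)
  | @rel a l' b m' hab =>
      intro hc
      have hl : ∀ x ∈ l', x < a := by
        intro x hx
        exact List.rel_of_pairwise_cons (List.isChain_iff_pairwise.mp hc) hx
      have h1 : toOrd l' < ω ^ a := toOrd_lt a l' hc.tail hl
      have h2 : ω ^ a < ω ^ b := (opow_lt_opow_iff_right one_lt_omega0).mpr hab
      have : ω ^ a + toOrd l' < ω ^ b := (principal_add_omega0_opow b) h2 (h1.trans h2)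
      exact this.trans_le le_self_add

lemma lex_append {l r : List Ordinal} (hr : r ≠ []) : List.Lex (· < ·) l (l ++ r) := by
  induction l with
  | nil => cases r with
    | nil => exact absurd rfl hr
    | cons b r' => exact List.Lex.nil
  | cons a l ih => exact List.Lex.cons ih

lemma lex_middle {p a b : List Ordinal} {x y : Ordinal} (h : x < y) :
    List.Lex (· < ·) (p ++ x :: a) (p ++ y :: b) := by
  induction p with
  | nil => exact List.Lex.rel h
  | cons c p ih => exact List.Lex.cons ih

lemma lex_decomp {l m : List Ordinal} (h : List.Lex (· < ·) l m) :
    (∃ r, r ≠ [] ∧ m = l ++ r) ∨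
    (∃ (p a b : List Ordinal) (x y : Ordinal), x < y ∧ l = p ++ x :: a ∧ m = p ++ y :: b) := by
  induction h with
  | @nil b m' => exact Or.inl ⟨b :: m', List.cons_ne_nil _ _, by simp⟩
  | @cons a l' m' h ih =>
      rcases ih with ⟨r, hr, rfl⟩ | ⟨p, x, y, u, v, huv, rfl, rfl⟩
      · exact Or.inl ⟨r, hr, by simp⟩
      · exact Or.inr ⟨a :: p, x, y, u, v, huv, rfl, rfl⟩
  | @rel a l' b m' hab =>
      exact Or.inr ⟨[], l', m', a, b, hab, rfl, rfl⟩

lemma seqLT_iff {σ τ : List Ordinal} :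
    SeqLT σ τ ↔ List.Lex (· < ·) σ.reverse τ.reverse := by
  constructor
  · rintro (⟨τ₀, hτ₀, rfl⟩ | ⟨σ₀, τ₀, σ₁, ν, ν', hνν', rfl, rfl⟩)
    · rw [List.reverse_append]
      exact lex_append (by simpa using hτ₀)
    · have h1 : (σ₀ ++ ν :: σ₁).reverse = σ₁.reverse ++ ν :: σ₀.reverse := by simp
      have h2 : (τ₀ ++ ν' :: σ₁).reverse = σ₁.reverse ++ ν' :: τ₀.reverse := by simp
      rw [h1, h2]
      exact lex_middle hνν'
  · intro h
    rcases lex_decomp h with ⟨r, hr, he⟩ | ⟨p, a, b, x, y, hxy, h1, h2⟩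
    · left
      refine ⟨r.reverse, by simpa using hr, ?_⟩
      have := congrArg List.reverse he
      simpa using this
    · right
      refine ⟨a.reverse, b.reverse, p.reverse, x, y, hxy, ?_, ?_⟩
      · have := congrArg List.reverse h1; simpa using this
      · have := congrArg List.reverse h2; simpa using this

lemma chain_rev {l : List Ordinal} (h : l.Chain' (· < ·)) : l.reverse.Chain' (· > ·) := by
  refine List.isChain_reverse.mpr ?_
  exact h

/-- On the set of finite strictly increasing sequences of ordinals all of whose entries
are bounded by a fixed ordinal `θ`, the ordering `SeqLT` is well-founded; together with
trichotomy this makes it a well-ordering of that set. -/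
theorem seqLT_wellFounded (θ : Ordinal) :
    WellFounded (fun σ τ : {l : List Ordinal // l.Chain' (· < ·) ∧ ∀ x ∈ l, x < θ} =>
      SeqLT σ.1 τ.1) ∧
    (∀ σ τ : {l : List Ordinal // l.Chain' (· < ·) ∧ ∀ x ∈ l, x < θ},
      SeqLT σ.1 τ.1 ∨ σ = τ ∨ SeqLT τ.1 σ.1) := by
  constructor
  · have hwf : WellFounded (InvImage (· < ·)
        (fun σ : {l : List Ordinal // l.Chain' (· < ·) ∧ ∀ x ∈ l, x < θ} =>
          toOrd σ.1.reverse)) := InvImage.wf _ Ordinal.lt_wf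
    refine Subrelation.wf (fun {σ τ} h => ?_) hwf
    exact toOrd_lt_of_lex (seqLT_iff.mp h) (chain_rev σ.2.1)
  · intro σ τ
    rcases trichotomous_of (List.Lex (α := Ordinal) (· < ·)) σ.1.reverse τ.1.reverse with h | h | h
    · exact Or.inl (seqLT_iff.mpr h)
    · refine Or.inr (Or.inl (Subtype.ext ?_))
      simpa using congrArg List.reverse h
    · exact Or.inr (Or.inr (seqLT_iff.mpr h))
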